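/- Node classifiers computed by 0/1-GNNs are closed under conjunction, disjunction, and negation: if c1 and c2 are node classifiers each computable by some 0/1-GNN, then ¬c1, c1 ∧ c2, and c1 ∨ c2 are also computable by 0/1-GNNs. -/

import Mathlib

inductive Var : Type
  | x | y
deriving DecidableEq

structure GNNGraph (P1 P2 : Type) where
  V : Type
  [fintV : Fintype V]
  [decV : DecidableEq V]
  unary : P1 → V → Prop
  rel : P2 → V → V → Prop
  [decU : ∀ p, DecidablePred (unary p)]
  [decR : ∀ r, DecidableRel (rel r)]

attribute [instance] GNNGraph.fintV GNNGraph.decV GNNGraph.decU GNNGraph.decR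

/-- Clamp function `f(t) = max(0, min(t,1))`. -/
def f01 (t : ℤ) : ℤ := max 0 (min t 1)

/-- A 0/1-GNN: integer matrices for combination, per-relation aggregation and global
readout, plus integer biases; input dimension `|P1|`, output dimension `1`. -/
structure ZOGNN (P1 P2 : Type) [Fintype P1] [Fintype P2] where
  L : ℕ
  dim : ℕ → ℕ
  dim0 : dim 0 = Fintype.card P1
  dimL : dim L = 1
  C : (i : ℕ) → Matrix (Fin (dim (i + 1))) (Fin (dim i)) ℤ
  A : P2 → (i : ℕ) → Matrix (Fin (dim (i + 1))) (Fin (dim i)) ℤ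
  R : (i : ℕ) → Matrix (Fin (dim (i + 1))) (Fin (dim i)) ℤ
  b : (i : ℕ) → Fin (dim (i + 1)) → ℤ

variable {P1 P2 : Type} [Fintype P1] [Fintype P2]

/-- Feature computation of a 0/1-GNN on a graph: one-hot initialization from the unary
predicates, then clamped integer-affine message passing with global readout. -/
noncomputable def ZOGNN.feat (N : ZOGNN P1 P2) (G : GNNGraph P1 P2) : (i : ℕ) → G.V → (Fin (N.dim i) → ℤ)
  | 0, v => fun j =>
      if G.unary ((Fintype.equivFin P1).symm (Fin.cast N.dim0 j)) v then 1 else 0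
  | i + 1, v => fun j =>
      f01 ((N.C i).mulVec (N.feat G i v) j
        + ∑ r : P2, ∑ u ∈ Finset.univ.filter (fun u => G.rel r v u),
            (N.A r i).mulVec (N.feat G i u) j
        + (N.R i).mulVec (∑ u : G.V, N.feat G i u) j
        + N.b i j)

/-- The node classifier computed by a 0/1-GNN: output `1` in the final 1-dimensional
feature means `true`. -/
def ZOGNN.Computes (N : ZOGNN P1 P2) (c : (G : GNNGraph P1 P2) → G.V → Prop) : Prop :=
  ∀ (G : GNNGraph P1 P2) (v : G.V),
    c G v ↔ N.feat G N.L v (Fin.cast N.dimL.symm (0 : Fin 1)) = 1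


section Helpers
/-- entry of a matrix at natural indices, 0 out of range -/
def ent {m n : ℕ} (M : Matrix (Fin m) (Fin n) ℤ) (j k : ℕ) : ℤ :=
  if h : j < m ∧ k < n then M ⟨j, h.1⟩ ⟨k, h.2⟩ else 0

def entv {n : ℕ} (x : Fin n → ℤ) (k : ℕ) : ℤ := if h : k < n then x ⟨k, h⟩ else 0

lemma entv_app {n : ℕ} (x : Fin n → ℤ) (k : Fin n) : entv x k.val = x k := by
  simp [entv]

lemma ent_app {m n : ℕ} (M : Matrix (Fin m) (Fin n) ℤ) (j : Fin m) (k : Fin n) :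
    ent M j.val k.val = M j k := by simp [ent]

lemma f01_01 (t : ℤ) : f01 t = 0 ∨ f01 t = 1 := by unfold f01; omega

lemma feat_01 (N : ZOGNN P1 P2) (G : GNNGraph P1 P2) :
    ∀ i v j, N.feat G i v j = 0 ∨ N.feat G i v j = 1 := by
  intro i v j
  cases i with
  | zero => simp only [ZOGNN.feat]; split <;> simp
  | succ i => simp only [ZOGNN.feat]; exact f01_01 _

lemma feat_succ (N : ZOGNN P1 P2) (G : GNNGraph P1 P2) (i : ℕ) (v : G.V) (j : Fin (N.dim (i+1))) :
    N.feat G (i+1) v j = f01 ((N.C i).mulVec (N.feat G i v) j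
        + ∑ r : P2, ∑ u ∈ Finset.univ.filter (fun u => G.rel r v u),
            (N.A r i).mulVec (N.feat G i u) j
        + (N.R i).mulVec (∑ u : G.V, N.feat G i u) j
        + N.b i j) := rfl
end Helpers

section Sums
/-- Block-1 sum lemma: a sum over a wide index range of `ent`-entries against a vector
agreeing with `y` on the first `n` coordinates equals a `mulVec`. -/
lemma sum_blk1 {m n N : ℕ} (hnN : n ≤ N) (M : Matrix (Fin m) (Fin n) ℤ) (j : Fin m)
    (x : Fin N → ℤ) (y : Fin n → ℤ) (hxy : ∀ k : Fin N, k.val < n → x k = entv y k.val) :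
    ∑ k : Fin N, ent M j.val k.val * x k = M.mulVec y j := by
  have h1 : ∑ k : Fin N, ent M j.val k.val * x k
      = ∑ k ∈ Finset.range N, ent M j.val k * entv x k := by
    rw [← Fin.sum_univ_eq_sum_range (fun k => ent M j.val k * entv x k) N]
    exact Finset.sum_congr rfl (fun k _ => by rw [entv_app])
  have h2 : ∑ k ∈ Finset.range N, ent M j.val k * entv x k
      = ∑ k ∈ Finset.range n, ent M j.val k * entv x k := by
    refine (Finset.sum_subset (Finset.range_subset_range.2 hnN) ?_).symm
    intro k _ hk
    simp only [Finset.mem_range, not_lt] at hk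
    have : ent M j.val k = 0 := by unfold ent; rw [dif_neg]; omega
    rw [this, zero_mul]
  rw [h1, h2, ← Fin.sum_univ_eq_sum_range (fun k => ent M j.val k * entv x k) n]
  unfold Matrix.mulVec dotProduct
  refine Finset.sum_congr rfl (fun k _ => ?_)
  have hkN : (k : ℕ) < N := lt_of_lt_of_le k.isLt hnN
  have hx : entv x k.val = x ⟨k.val, hkN⟩ := by simp [entv, hkN]
  rw [ent_app M j k, hx, hxy ⟨k.val, hkN⟩ k.isLt]
  simp [entv]

/-- Block-2 sum lemma: offset version. -/
lemma sum_blk2 {m n N co : ℕ} (hnN : co + n ≤ N) (M : Matrix (Fin m) (Fin n) ℤ) (j : Fin m)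
    (x : Fin N → ℤ) (y : Fin n → ℤ)
    (hxy : ∀ k : Fin N, co ≤ k.val → x k = entv y (k.val - co)) :
    ∑ k : Fin N, (if co ≤ k.val then ent M j.val (k.val - co) else 0) * x k
      = M.mulVec y j := by
  have h1 : ∑ k : Fin N, (if co ≤ k.val then ent M j.val (k.val - co) else 0) * x k
      = ∑ k ∈ Finset.range N, (if co ≤ k then ent M j.val (k - co) else 0) * entv x k := by
    rw [← Fin.sum_univ_eq_sum_range (fun k => (if co ≤ k then ent M j.val (k - co) else 0) * entv x k) N]
    exact Finset.sum_congr rfl (fun k _ => by rw [entv_app])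
  have h2 : ∑ k ∈ Finset.range N, (if co ≤ k then ent M j.val (k - co) else 0) * entv x k
      = ∑ k ∈ Finset.range (co + n), (if co ≤ k then ent M j.val (k - co) else 0) * entv x k := by
    refine (Finset.sum_subset (Finset.range_subset_range.2 hnN) ?_).symm
    intro k _ hk
    simp only [Finset.mem_range, not_lt] at hk
    have : (if co ≤ k then ent M j.val (k - co) else 0) = 0 := by
      rw [if_pos (by omega)]; unfold ent; rw [dif_neg]; omega
    rw [this, zero_mul]
  have h3 : ∑ k ∈ Finset.range (co + n), (if co ≤ k then ent M j.val (k - co) else 0) * entv x k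
      = ∑ k ∈ Finset.range n, ent M j.val k * entv x (co + k) := by
    conv_lhs => rw [Finset.range_eq_Ico, ← Finset.sum_Ico_consecutive _ (Nat.zero_le co) (Nat.le_add_right co n)]
    have hz : ∑ k ∈ Finset.Ico 0 co, (if co ≤ k then ent M j.val (k - co) else 0) * entv x k = 0 := by
      refine Finset.sum_eq_zero (fun k hk => ?_)
      simp only [Finset.mem_Ico] at hk
      rw [if_neg (by omega), zero_mul]
    rw [hz, zero_add, Finset.sum_Ico_eq_sum_range]
    simp only [Nat.add_sub_cancel_left]
    refine Finset.sum_congr rfl (fun k hk => ?_)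
    simp [Nat.le_add_right]
  rw [h1, h2, h3, ← Fin.sum_univ_eq_sum_range (fun k => ent M j.val k * entv x (co + k)) n]
  unfold Matrix.mulVec dotProduct
  refine Finset.sum_congr rfl (fun k _ => ?_)
  have hkN : co + (k : ℕ) < N := by omega
  have hx : entv x (co + k.val) = x ⟨co + k.val, hkN⟩ := by simp [entv, hkN]
  rw [ent_app M j k, hx, hxy ⟨co + k.val, hkN⟩ (by simp)]
  simp [entv]
end Sums

section Extend

lemma entv_sum {α : Type*} {n : ℕ} (s : Finset α) (y : α → Fin n → ℤ) (k : ℕ) :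
    entv (∑ u ∈ s, y u) k = ∑ u ∈ s, entv (y u) k := by
  unfold entv
  split
  · simp [Finset.sum_apply]
  · simp

lemma mulVec_if_ent {m n m' n' : ℕ} (hn : n' = n) (c : Prop) [Decidable c] (hc : c)
    (M : Matrix (Fin m) (Fin n) ℤ) (Z : ℕ → ℕ → ℤ)
    (x : Fin n' → ℤ) (y : Fin n → ℤ) (hxy : ∀ k : Fin n', x k = entv y k.val)
    (j : Fin m') (j' : Fin m) (hj : j.val = j'.val) :
    (Matrix.of fun (p : Fin m') (q : Fin n') =>
      if c then ent M p.val q.val else Z p.val q.val).mulVec x j = M.mulVec y j' := by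
  rw [← sum_blk1 (le_of_eq hn.symm) M j' x y (fun k _ => hxy k)]
  unfold Matrix.mulVec dotProduct
  simp [Matrix.of_apply, hc, hj]

/-- Append one layer computing `f01 (a * x + β)` to a 0/1-GNN. -/
def ZOGNN.extend (N : ZOGNN P1 P2) (a β : ℤ) : ZOGNN P1 P2 where
  L := N.L + 1
  dim := fun i => if i ≤ N.L then N.dim i else 1
  dim0 := by simp [N.dim0]
  dimL := by simp
  C := fun i => Matrix.of fun j k =>
    if i < N.L then ent (N.C i) j.val k.val else if j.val = 0 ∧ k.val = 0 then a else 0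
  A := fun r i => Matrix.of fun j k => if i < N.L then ent (N.A r i) j.val k.val else 0
  R := fun i => Matrix.of fun j k => if i < N.L then ent (N.R i) j.val k.val else 0
  b := fun i j => if i < N.L then entv (N.b i) j.val else β

lemma extend_L (N : ZOGNN P1 P2) (a β : ℤ) : (N.extend a β).L = N.L + 1 := rfl

lemma extend_C (N : ZOGNN P1 P2) (a β : ℤ) (i : ℕ) :
    (N.extend a β).C i = Matrix.of fun j k =>
      if i < N.L then ent (N.C i) j.val k.val else if j.val = 0 ∧ k.val = 0 then a else 0 := rfl

lemma extend_A (N : ZOGNN P1 P2) (a β : ℤ) (r : P2) (i : ℕ) :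
    (N.extend a β).A r i = Matrix.of fun j k =>
      if i < N.L then ent (N.A r i) j.val k.val else 0 := rfl

lemma extend_R (N : ZOGNN P1 P2) (a β : ℤ) (i : ℕ) :
    (N.extend a β).R i = Matrix.of fun j k =>
      if i < N.L then ent (N.R i) j.val k.val else 0 := rfl

lemma extend_b (N : ZOGNN P1 P2) (a β : ℤ) (i : ℕ) (j : Fin ((N.extend a β).dim (i+1))) :
    (N.extend a β).b i j = if i < N.L then entv (N.b i) j.val else β := rfl

lemma extend_dim_eq (N : ZOGNN P1 P2) (a β : ℤ) {i : ℕ} (hi : i ≤ N.L) :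
    (N.extend a β).dim i = N.dim i := by simp [ZOGNN.extend, hi]

lemma extend_feat (N : ZOGNN P1 P2) (a β : ℤ) (G : GNNGraph P1 P2) :
    ∀ i, i ≤ N.L → ∀ (v : G.V) (j : Fin ((N.extend a β).dim i)) (j' : Fin (N.dim i)),
      j.val = j'.val → (N.extend a β).feat G i v j = N.feat G i v j' := by
  intro i
  induction i with
  | zero =>
    intro _ v j j' hjj
    simp only [ZOGNN.feat]
    congr 2
    exact congrArg _ (Fin.ext (by simpa using hjj))
  | succ i ih =>
    intro hi v j j' hjj
    have hiL : i < N.L := hi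
    have hdim : (N.extend a β).dim i = N.dim i := extend_dim_eq N a β (le_of_lt hiL)
    have key : ∀ (u : G.V) (k : Fin ((N.extend a β).dim i)),
        (N.extend a β).feat G i u k = entv (N.feat G i u) k.val := by
      intro u k
      have hk : k.val < N.dim i := hdim ▸ k.isLt
      rw [ih (le_of_lt hiL) u k ⟨k.val, hk⟩ rfl]
      simp [entv, hk]
    rw [feat_succ, feat_succ]
    congr 1
    have hC : ((N.extend a β).C i).mulVec ((N.extend a β).feat G i v) j
        = (N.C i).mulVec (N.feat G i v) j' := by
      rw [extend_C]
      exact mulVec_if_ent hdim _ hiL (N.C i) (fun p q => if p = 0 ∧ q = 0 then a else 0) _ _ (key v) j j' hjj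
    have hA : ∀ (r : P2) (u : G.V), ((N.extend a β).A r i).mulVec ((N.extend a β).feat G i u) j
        = (N.A r i).mulVec (N.feat G i u) j' := by
      intro r u
      rw [extend_A]
      exact mulVec_if_ent hdim _ hiL (N.A r i) (fun _ _ => 0) _ _ (key u) j j' hjj
    have hR : ((N.extend a β).R i).mulVec (∑ u : G.V, (N.extend a β).feat G i u) j
        = (N.R i).mulVec (∑ u : G.V, N.feat G i u) j' := by
      rw [extend_R]
      refine mulVec_if_ent hdim _ hiL (N.R i) (fun _ _ => 0) _ _ (fun k => ?_) j j' hjj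
      rw [entv_sum]
      simp only [Finset.sum_apply]
      exact Finset.sum_congr rfl (fun u _ => key u k)
    have hb : (N.extend a β).b i j = N.b i j' := by
      rw [extend_b, if_pos hiL, hjj, entv_app]
    have hAs : ∑ r : P2, ∑ u ∈ Finset.univ.filter (fun u => G.rel r v u),
        ((N.extend a β).A r i).mulVec ((N.extend a β).feat G i u) j
        = ∑ r : P2, ∑ u ∈ Finset.univ.filter (fun u => G.rel r v u),
            (N.A r i).mulVec (N.feat G i u) j' :=
      Finset.sum_congr rfl fun r _ => Finset.sum_congr rfl fun u _ => hA r u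
    rw [hC, hAs, hR, hb]

lemma extend_out (N : ZOGNN P1 P2) (a β : ℤ) (G : GNNGraph P1 P2) (v : G.V)
    (j : Fin ((N.extend a β).dim (N.L + 1))) :
    (N.extend a β).feat G (N.L + 1) v j
      = f01 (a * N.feat G N.L v (Fin.cast N.dimL.symm (0 : Fin 1)) + β) := by
  rw [feat_succ]
  have hnl : ¬ (N.L < N.L) := lt_irrefl _
  have hdim : (N.extend a β).dim N.L = N.dim N.L := extend_dim_eq N a β le_rfl
  have hdim1 : (N.extend a β).dim N.L = 1 := by rw [hdim, N.dimL]
  have hj0 : j.val = 0 := by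
    have h2 := j.isLt
    have h1 : (N.extend a β).dim (N.L + 1) = 1 := by simp [ZOGNN.extend]
    omega
  have key : ∀ (u : G.V) (k : Fin ((N.extend a β).dim N.L)),
      (N.extend a β).feat G N.L u k = N.feat G N.L u (Fin.cast hdim k) :=
    fun u k => extend_feat N a β G N.L le_rfl u k (Fin.cast hdim k) rfl
  have hC : ((N.extend a β).C N.L).mulVec ((N.extend a β).feat G N.L v) j
      = a * N.feat G N.L v (Fin.cast N.dimL.symm (0 : Fin 1)) := by
    rw [extend_C]
    unfold Matrix.mulVec dotProduct
    have h1 : ∑ k : Fin ((N.extend a β).dim N.L),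
        (Matrix.of fun (p : Fin ((N.extend a β).dim (N.L+1))) (q : Fin ((N.extend a β).dim N.L)) =>
          if N.L < N.L then ent (N.C N.L) p.val q.val else if p.val = 0 ∧ q.val = 0 then a else 0) j k
          * (N.extend a β).feat G N.L v k
        = ∑ k ∈ Finset.range ((N.extend a β).dim N.L),
            (if N.L < N.L then ent (N.C N.L) j.val k else if j.val = 0 ∧ k = 0 then a else 0)
              * entv ((N.extend a β).feat G N.L v) k := by
      rw [← Fin.sum_univ_eq_sum_range (fun k =>
        (if N.L < N.L then ent (N.C N.L) j.val k else if j.val = 0 ∧ k = 0 then a else 0)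
          * entv ((N.extend a β).feat G N.L v) k)]
      exact Finset.sum_congr rfl (fun k _ => by rw [entv_app, Matrix.of_apply])
    rw [h1, show Finset.range ((N.extend a β).dim N.L) = Finset.range 1 from by rw [hdim1],
      Finset.sum_range_one, if_neg hnl, if_pos ⟨hj0, rfl⟩]
    congr 1
    have h0 : (0 : ℕ) < (N.extend a β).dim N.L := by omega
    have : entv ((N.extend a β).feat G N.L v) 0 = (N.extend a β).feat G N.L v ⟨0, h0⟩ := by
      simp [entv, h0]
    rw [this, key]
    exact congrArg _ (by apply Fin.ext; simp)
  have hA : ∀ (r : P2) (u : G.V),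
      ((N.extend a β).A r N.L).mulVec ((N.extend a β).feat G N.L u) j = 0 := by
    intro r u
    rw [extend_A]
    unfold Matrix.mulVec dotProduct
    simp [Matrix.of_apply, hnl]
  have hR : ((N.extend a β).R N.L).mulVec (∑ u : G.V, (N.extend a β).feat G N.L u) j = 0 := by
    rw [extend_R]
    unfold Matrix.mulVec dotProduct
    simp [Matrix.of_apply, hnl]
  have hb : (N.extend a β).b N.L j = β := by rw [extend_b, if_neg hnl]
  rw [hC, hR, hb]
  simp [hA]

end Extend

section NegPad

lemma feat_congr_layer (N : ZOGNN P1 P2) (G : GNNGraph P1 P2) (v : G.V) {i i' : ℕ} (h : i = i')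
    (j : Fin (N.dim i)) (j' : Fin (N.dim i')) (hjj : j.val = j'.val) :
    N.feat G i v j = N.feat G i' v j' := by
  subst h
  exact congrArg _ (Fin.ext hjj)

lemma neg_computes (N : ZOGNN P1 P2) (c : (G : GNNGraph P1 P2) → G.V → Prop)
    (h : N.Computes c) : (N.extend (-1) 1).Computes (fun G v => ¬ c G v) := by
  intro G v
  set N' := N.extend (-1) 1 with hN'
  have hidx : N'.feat G N'.L v (Fin.cast N'.dimL.symm (0 : Fin 1))
      = N'.feat G (N.L + 1) v (Fin.cast (by rw [extend_L]) (Fin.cast N'.dimL.symm (0 : Fin 1))) :=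
    feat_congr_layer N' G v (extend_L N (-1) 1) _ _ rfl
  rw [hidx, extend_out]
  show ¬ c G v ↔ _
  rw [h G v]
  rcases feat_01 N G N.L v (Fin.cast N.dimL.symm (0 : Fin 1)) with h0 | h0 <;>
    rw [h0] <;> simp [f01]

lemma pad_computes (N : ZOGNN P1 P2) (c : (G : GNNGraph P1 P2) → G.V → Prop)
    (h : N.Computes c) : (N.extend 1 0).Computes c := by
  intro G v
  set N' := N.extend 1 0 with hN'
  have hidx : N'.feat G N'.L v (Fin.cast N'.dimL.symm (0 : Fin 1))
      = N'.feat G (N.L + 1) v (Fin.cast (by rw [extend_L]) (Fin.cast N'.dimL.symm (0 : Fin 1))) :=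
    feat_congr_layer N' G v (extend_L N 1 0) _ _ rfl
  rw [hidx, extend_out]
  rw [h G v]
  rcases feat_01 N G N.L v (Fin.cast N.dimL.symm (0 : Fin 1)) with h0 | h0 <;>
    rw [h0] <;> simp [f01]

lemma pad_to (N : ZOGNN P1 P2) (c : (G : GNNGraph P1 P2) → G.V → Prop)
    (h : N.Computes c) : ∀ n, N.L ≤ n → ∃ N' : ZOGNN P1 P2, N'.L = n ∧ N'.Computes c := by
  intro n hn
  induction n, hn using Nat.le_induction with
  | base => exact ⟨N, rfl, h⟩
  | succ n hn ih =>
    obtain ⟨N', hL, hc⟩ := ih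
    exact ⟨N'.extend 1 0, by rw [extend_L, hL], pad_computes N' c hc⟩

end NegPad

section Combine

/-- Block entry combinator: rows split at `d1`, block-2 columns offset by `co`. -/
def blk (d1 co : ℕ) (e1 e2 : ℕ → ℕ → ℤ) (j k : ℕ) : ℤ :=
  if j < d1 then e1 j k else if co ≤ k then e2 (j - d1) (k - co) else 0

/-- Column offset of the second block at layer `i` (the two blocks share input at layer 0). -/
def off (d : ℕ → ℕ) (i : ℕ) : ℕ := if i = 0 then 0 else d i

lemma mulVec_blk1 {m n m' n' : ℕ} (hn : n ≤ n') (c : Prop) [Decidable c] (hc : c)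
    (M : Matrix (Fin m) (Fin n) ℤ) (e2 : ℕ → ℕ → ℤ) (co : ℕ) (Z : ℕ → ℕ → ℤ)
    (x : Fin n' → ℤ) (y : Fin n → ℤ) (hxy : ∀ k : Fin n', k.val < n → x k = entv y k.val)
    (j : Fin m') (hj : j.val < m) :
    (Matrix.of fun (p : Fin m') (q : Fin n') =>
        if c then blk m co (ent M) e2 p.val q.val else Z p.val q.val).mulVec x j
      = M.mulVec y ⟨j.val, hj⟩ := by
  rw [← sum_blk1 hn M ⟨j.val, hj⟩ x y hxy]
  unfold Matrix.mulVec dotProduct blk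
  simp [Matrix.of_apply, hc, hj]

lemma mulVec_blk2 {m n m' n' d1 co : ℕ} (hn : co + n ≤ n') (c : Prop) [Decidable c] (hc : c)
    (e1 : ℕ → ℕ → ℤ) (M : Matrix (Fin m) (Fin n) ℤ) (Z : ℕ → ℕ → ℤ)
    (x : Fin n' → ℤ) (y : Fin n → ℤ)
    (hxy : ∀ k : Fin n', co ≤ k.val → x k = entv y (k.val - co))
    (j : Fin m') (hj1 : d1 ≤ j.val) (hj : j.val - d1 < m) :
    (Matrix.of fun (p : Fin m') (q : Fin n') =>
        if c then blk d1 co e1 (ent M) p.val q.val else Z p.val q.val).mulVec x j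
      = M.mulVec y ⟨j.val - d1, hj⟩ := by
  rw [← sum_blk2 hn M ⟨j.val - d1, hj⟩ x y hxy]
  unfold Matrix.mulVec dotProduct blk
  simp [Matrix.of_apply, hc, show ¬ (j.val < d1) from by omega]

/-- Parallel composition of two 0/1-GNNs followed by a layer computing
`f01 (x₁ + x₂ + β)` on the two outputs. -/
def ZOGNN.combine (N1 N2 : ZOGNN P1 P2) (β : ℤ) : ZOGNN P1 P2 where
  L := N1.L + 1
  dim := fun i => if i = 0 then Fintype.card P1 else if i ≤ N1.L then N1.dim i + N2.dim i else 1
  dim0 := by simp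
  dimL := by simp
  C := fun i => Matrix.of fun j k =>
    if i < N1.L then
      blk (N1.dim (i+1)) (off N1.dim i) (ent (N1.C i)) (ent (N2.C i)) j.val k.val
    else if j.val = 0 ∧ k.val < 2 then 1 else 0
  A := fun r i => Matrix.of fun j k =>
    if i < N1.L then
      blk (N1.dim (i+1)) (off N1.dim i) (ent (N1.A r i)) (ent (N2.A r i)) j.val k.val
    else 0
  R := fun i => Matrix.of fun j k =>
    if i < N1.L then
      blk (N1.dim (i+1)) (off N1.dim i) (ent (N1.R i)) (ent (N2.R i)) j.val k.val
    else 0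
  b := fun i j =>
    if i < N1.L then
      (if j.val < N1.dim (i+1) then entv (N1.b i) j.val else entv (N2.b i) (j.val - N1.dim (i+1)))
    else β

lemma combine_L (N1 N2 : ZOGNN P1 P2) (β : ℤ) : (N1.combine N2 β).L = N1.L + 1 := rfl

lemma combine_dim (N1 N2 : ZOGNN P1 P2) (β : ℤ) (i : ℕ) :
    (N1.combine N2 β).dim i
      = if i = 0 then Fintype.card P1 else if i ≤ N1.L then N1.dim i + N2.dim i else 1 := rfl

lemma combine_C (N1 N2 : ZOGNN P1 P2) (β : ℤ) (i : ℕ) :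
    (N1.combine N2 β).C i = Matrix.of fun j k =>
      if i < N1.L then
        blk (N1.dim (i+1)) (off N1.dim i) (ent (N1.C i)) (ent (N2.C i)) j.val k.val
      else if j.val = 0 ∧ k.val < 2 then 1 else 0 := rfl

lemma combine_A (N1 N2 : ZOGNN P1 P2) (β : ℤ) (r : P2) (i : ℕ) :
    (N1.combine N2 β).A r i = Matrix.of fun j k =>
      if i < N1.L then
        blk (N1.dim (i+1)) (off N1.dim i) (ent (N1.A r i)) (ent (N2.A r i)) j.val k.val
      else 0 := rfl

lemma combine_R (N1 N2 : ZOGNN P1 P2) (β : ℤ) (i : ℕ) :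
    (N1.combine N2 β).R i = Matrix.of fun j k =>
      if i < N1.L then
        blk (N1.dim (i+1)) (off N1.dim i) (ent (N1.R i)) (ent (N2.R i)) j.val k.val
      else 0 := rfl

lemma combine_b (N1 N2 : ZOGNN P1 P2) (β : ℤ) (i : ℕ) (j : Fin ((N1.combine N2 β).dim (i+1))) :
    (N1.combine N2 β).b i j =
      if i < N1.L then
        (if j.val < N1.dim (i+1) then entv (N1.b i) j.val else entv (N2.b i) (j.val - N1.dim (i+1)))
      else β := rfl

/-- The entv of layer-0 features is independent of the network. -/
lemma feat_zero_entv (N M : ZOGNN P1 P2) (G : GNNGraph P1 P2) (v : G.V) (k : ℕ) :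
    entv (N.feat G 0 v) k = entv (M.feat G 0 v) k := by
  have hN := N.dim0
  have hM := M.dim0
  rcases lt_or_ge k (Fintype.card P1) with h | h
  · have hkN : k < N.dim 0 := by omega
    have hkM : k < M.dim 0 := by omega
    rw [entv, dif_pos hkN, entv, dif_pos hkM]
    simp only [ZOGNN.feat]
    congr 2
  · rw [entv, dif_neg (by omega), entv, dif_neg (by omega)]

lemma combine_feat (N1 N2 : ZOGNN P1 P2) (β : ℤ) (G : GNNGraph P1 P2) :
    ∀ i, i ≤ N1.L → ∀ (v : G.V) (j : Fin ((N1.combine N2 β).dim i)),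
      (j.val < N1.dim i → (N1.combine N2 β).feat G i v j = entv (N1.feat G i v) j.val) ∧
      (off N1.dim i ≤ j.val →
        (N1.combine N2 β).feat G i v j = entv (N2.feat G i v) (j.val - off N1.dim i)) := by
  intro i
  induction i with
  | zero =>
    intro _ v j
    have hj : j.val < Fintype.card P1 := by
      have := j.isLt
      have hd : (N1.combine N2 β).dim 0 = Fintype.card P1 := by rw [combine_dim]; simp
      omega
    have hfeat : (N1.combine N2 β).feat G 0 v j = entv ((N1.combine N2 β).feat G 0 v) j.val := (entv_app _ j).symm
    constructor
    · intro _
      rw [hfeat, feat_zero_entv (N1.combine N2 β) N1]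
    · intro _
      rw [hfeat, feat_zero_entv (N1.combine N2 β) N2]
      simp [off]
  | succ i ih =>
    intro hi v j
    have hiL : i < N1.L := hi
    have hd1 : N1.dim i ≤ (N1.combine N2 β).dim i := by
      have hc := combine_dim N1 N2 β i
      have h10 := N1.dim0
      rcases Nat.eq_zero_or_pos i with h0 | h0
      · subst h0; norm_num at hc; omega
      · rw [if_neg (by omega), if_pos (le_of_lt hiL)] at hc; omega
    have hd2 : off N1.dim i + N2.dim i = (N1.combine N2 β).dim i := by
      have hc := combine_dim N1 N2 β i
      have h20 := N2.dim0
      rcases Nat.eq_zero_or_pos i with h0 | h0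
      · subst h0; rw [off, if_pos rfl]; norm_num at hc; omega
      · rw [off, if_neg (by omega)]; rw [if_neg (by omega), if_pos (le_of_lt hiL)] at hc; omega
    have hdi1 : (N1.combine N2 β).dim (i+1) = N1.dim (i+1) + N2.dim (i+1) := by
      have hc := combine_dim N1 N2 β (i+1)
      rw [if_neg (by omega), if_pos hi] at hc
      exact hc
    have key1 : ∀ (u : G.V) (k : Fin ((N1.combine N2 β).dim i)), k.val < N1.dim i →
        (N1.combine N2 β).feat G i u k = entv (N1.feat G i u) k.val :=
      fun u k hk => (ih (le_of_lt hiL) u k).1 hk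
    have key2 : ∀ (u : G.V) (k : Fin ((N1.combine N2 β).dim i)), off N1.dim i ≤ k.val →
        (N1.combine N2 β).feat G i u k = entv (N2.feat G i u) (k.val - off N1.dim i) :=
      fun u k hk => (ih (le_of_lt hiL) u k).2 hk
    constructor
    · -- block 1
      intro hj
      have hC : ((N1.combine N2 β).C i).mulVec ((N1.combine N2 β).feat G i v) j = (N1.C i).mulVec (N1.feat G i v) ⟨j.val, hj⟩ := by
        rw [combine_C]
        exact mulVec_blk1 hd1 _ hiL (N1.C i) (ent (N2.C i)) (off N1.dim i) (fun p q => if p = 0 ∧ q < 2 then 1 else 0) _ _ (key1 v) j hj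
      have hA : ∀ (r : P2) (u : G.V), ((N1.combine N2 β).A r i).mulVec ((N1.combine N2 β).feat G i u) j
          = (N1.A r i).mulVec (N1.feat G i u) ⟨j.val, hj⟩ := by
        intro r u
        rw [combine_A]
        exact mulVec_blk1 hd1 _ hiL (N1.A r i) (ent (N2.A r i)) (off N1.dim i) (fun _ _ => 0) _ _ (key1 u) j hj
      have hR : ((N1.combine N2 β).R i).mulVec (∑ u : G.V, (N1.combine N2 β).feat G i u) j
          = (N1.R i).mulVec (∑ u : G.V, N1.feat G i u) ⟨j.val, hj⟩ := by
        rw [combine_R]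
        refine mulVec_blk1 hd1 _ hiL (N1.R i) (ent (N2.R i)) (off N1.dim i) (fun _ _ => 0) _ _ (fun k hk => ?_) j hj
        rw [entv_sum]
        simp only [Finset.sum_apply]
        exact Finset.sum_congr rfl (fun u _ => key1 u k hk)
      have hb : (N1.combine N2 β).b i j = N1.b i ⟨j.val, hj⟩ := by
        rw [combine_b, if_pos hiL, if_pos hj]
        rw [show entv (N1.b i) j.val = N1.b i ⟨j.val, hj⟩ from by simp [entv, hj]]
      have hAs : ∑ r : P2, ∑ u ∈ Finset.univ.filter (fun u => G.rel r v u),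
          ((N1.combine N2 β).A r i).mulVec ((N1.combine N2 β).feat G i u) j
          = ∑ r : P2, ∑ u ∈ Finset.univ.filter (fun u => G.rel r v u),
              (N1.A r i).mulVec (N1.feat G i u) ⟨j.val, hj⟩ :=
        Finset.sum_congr rfl fun r _ => Finset.sum_congr rfl fun u _ => hA r u
      rw [feat_succ, hC, hAs, hR, hb, show entv (N1.feat G (i+1) v) j.val
        = N1.feat G (i+1) v ⟨j.val, hj⟩ from by simp [entv, hj], feat_succ]
    · -- block 2
      intro hj1
      have hoff : off N1.dim (i+1) = N1.dim (i+1) := by rw [off, if_neg (by omega)]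
      rw [hoff] at hj1
      have hj2 : j.val - N1.dim (i+1) < N2.dim (i+1) := by
        have := j.isLt
        omega
      have hC : ((N1.combine N2 β).C i).mulVec ((N1.combine N2 β).feat G i v) j
          = (N2.C i).mulVec (N2.feat G i v) ⟨j.val - N1.dim (i+1), hj2⟩ := by
        rw [combine_C]
        exact mulVec_blk2 (le_of_eq hd2) _ hiL (ent (N1.C i)) (N2.C i) (fun p q => if p = 0 ∧ q < 2 then 1 else 0) _ _ (key2 v) j hj1 hj2
      have hA : ∀ (r : P2) (u : G.V), ((N1.combine N2 β).A r i).mulVec ((N1.combine N2 β).feat G i u) j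
          = (N2.A r i).mulVec (N2.feat G i u) ⟨j.val - N1.dim (i+1), hj2⟩ := by
        intro r u
        rw [combine_A]
        exact mulVec_blk2 (le_of_eq hd2) _ hiL (ent (N1.A r i)) (N2.A r i) (fun _ _ => 0) _ _ (key2 u) j hj1 hj2
      have hR : ((N1.combine N2 β).R i).mulVec (∑ u : G.V, (N1.combine N2 β).feat G i u) j
          = (N2.R i).mulVec (∑ u : G.V, N2.feat G i u) ⟨j.val - N1.dim (i+1), hj2⟩ := by
        rw [combine_R]
        refine mulVec_blk2 (le_of_eq hd2) _ hiL (ent (N1.R i)) (N2.R i) (fun _ _ => 0) _ _ (fun k hk => ?_) j hj1 hj2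
        rw [entv_sum]
        simp only [Finset.sum_apply]
        exact Finset.sum_congr rfl (fun u _ => key2 u k hk)
      have hb : (N1.combine N2 β).b i j = N2.b i ⟨j.val - N1.dim (i+1), hj2⟩ := by
        rw [combine_b, if_pos hiL, if_neg (by omega)]
        rw [show entv (N2.b i) (j.val - N1.dim (i+1))
          = N2.b i ⟨j.val - N1.dim (i+1), hj2⟩ from by simp [entv, hj2]]
      have hAs : ∑ r : P2, ∑ u ∈ Finset.univ.filter (fun u => G.rel r v u),
          ((N1.combine N2 β).A r i).mulVec ((N1.combine N2 β).feat G i u) j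
          = ∑ r : P2, ∑ u ∈ Finset.univ.filter (fun u => G.rel r v u),
              (N2.A r i).mulVec (N2.feat G i u) ⟨j.val - N1.dim (i+1), hj2⟩ :=
        Finset.sum_congr rfl fun r _ => Finset.sum_congr rfl fun u _ => hA r u
      rw [hoff, feat_succ, hC, hAs, hR, hb, show entv (N2.feat G (i+1) v) (j.val - N1.dim (i+1))
        = N2.feat G (i+1) v ⟨j.val - N1.dim (i+1), hj2⟩ from by simp [entv, hj2], feat_succ]

end Combine

section Final

lemma combine_out (N1 N2 : ZOGNN P1 P2) (β : ℤ) (hL : N2.L = N1.L) (h1 : 1 ≤ N1.L)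
    (G : GNNGraph P1 P2) (v : G.V) (j : Fin ((N1.combine N2 β).dim (N1.L + 1))) :
    (N1.combine N2 β).feat G (N1.L + 1) v j
      = f01 (N1.feat G N1.L v (Fin.cast N1.dimL.symm (0 : Fin 1))
          + N2.feat G N2.L v (Fin.cast N2.dimL.symm (0 : Fin 1)) + β) := by
  rw [feat_succ]
  have hnl : ¬ (N1.L < N1.L) := lt_irrefl _
  have h2L : N2.dim N1.L = 1 := by rw [← hL]; exact N2.dimL
  have hdL : (N1.combine N2 β).dim N1.L = 2 := by
    have hc := combine_dim N1 N2 β N1.L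
    rw [if_neg (by omega), if_pos le_rfl] at hc
    have h1d := N1.dimL
    omega
  have hj0 : j.val = 0 := by
    have h2 := j.isLt
    have hc : (N1.combine N2 β).dim (N1.L + 1) = 1 := by
      have hc := combine_dim N1 N2 β (N1.L + 1)
      rw [if_neg (by omega), if_neg (by omega)] at hc
      exact hc
    omega
  have h0lt : (0:ℕ) < (N1.combine N2 β).dim N1.L := by omega
  have h1lt : (1:ℕ) < (N1.combine N2 β).dim N1.L := by omega
  have hoffL : off N1.dim N1.L = 1 := by rw [off, if_neg (by omega), N1.dimL]
  have e0 : entv ((N1.combine N2 β).feat G N1.L v) 0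
      = N1.feat G N1.L v (Fin.cast N1.dimL.symm (0 : Fin 1)) := by
    rw [entv, dif_pos h0lt]
    rw [(combine_feat N1 N2 β G N1.L le_rfl v ⟨0, h0lt⟩).1 (by show (0:ℕ) < N1.dim N1.L; rw [N1.dimL]; omega)]
    rw [entv, dif_pos (show (0:ℕ) < N1.dim N1.L by rw [N1.dimL]; omega)]
    exact feat_congr_layer N1 G v rfl _ _ rfl
  have e1 : entv ((N1.combine N2 β).feat G N1.L v) 1
      = N2.feat G N2.L v (Fin.cast N2.dimL.symm (0 : Fin 1)) := by
    rw [entv, dif_pos h1lt]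
    rw [(combine_feat N1 N2 β G N1.L le_rfl v ⟨1, h1lt⟩).2 (by show off N1.dim N1.L ≤ 1; rw [hoffL])]
    rw [hoffL]
    simp only [Nat.sub_self]
    have h02 : (0:ℕ) < N2.dim N1.L := by omega
    rw [entv, dif_pos h02]
    exact feat_congr_layer N2 G v hL.symm _ _ rfl
  have hC : ((N1.combine N2 β).C N1.L).mulVec ((N1.combine N2 β).feat G N1.L v) j
      = N1.feat G N1.L v (Fin.cast N1.dimL.symm (0 : Fin 1))
        + N2.feat G N2.L v (Fin.cast N2.dimL.symm (0 : Fin 1)) := by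
    rw [combine_C]
    unfold Matrix.mulVec dotProduct
    have h1s : ∑ k : Fin ((N1.combine N2 β).dim N1.L),
        (Matrix.of fun (p : Fin ((N1.combine N2 β).dim (N1.L+1))) (q : Fin ((N1.combine N2 β).dim N1.L)) =>
          if N1.L < N1.L then
            blk (N1.dim (N1.L+1)) (off N1.dim N1.L) (ent (N1.C N1.L)) (ent (N2.C N1.L)) p.val q.val
          else if p.val = 0 ∧ q.val < 2 then 1 else 0) j k * (N1.combine N2 β).feat G N1.L v k
        = ∑ k ∈ Finset.range ((N1.combine N2 β).dim N1.L),
            (if N1.L < N1.L then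
              blk (N1.dim (N1.L+1)) (off N1.dim N1.L) (ent (N1.C N1.L)) (ent (N2.C N1.L)) j.val k
             else if j.val = 0 ∧ k < 2 then 1 else 0) * entv ((N1.combine N2 β).feat G N1.L v) k := by
      rw [← Fin.sum_univ_eq_sum_range (fun k =>
        (if N1.L < N1.L then
          blk (N1.dim (N1.L+1)) (off N1.dim N1.L) (ent (N1.C N1.L)) (ent (N2.C N1.L)) j.val k
         else if j.val = 0 ∧ k < 2 then 1 else 0) * entv ((N1.combine N2 β).feat G N1.L v) k)]
      exact Finset.sum_congr rfl (fun k _ => by rw [entv_app, Matrix.of_apply])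
    rw [h1s, show Finset.range ((N1.combine N2 β).dim N1.L) = Finset.range 2 from by rw [hdL],
      Finset.sum_range_succ, Finset.sum_range_one]
    simp only [if_neg hnl]
    rw [if_pos ⟨hj0, by norm_num⟩, if_pos ⟨hj0, by norm_num⟩, e0, e1]
    ring
  have hA : ∀ (r : P2) (u : G.V),
      ((N1.combine N2 β).A r N1.L).mulVec ((N1.combine N2 β).feat G N1.L u) j = 0 := by
    intro r u
    rw [combine_A]
    unfold Matrix.mulVec dotProduct
    simp [Matrix.of_apply, hnl]
  have hR : ((N1.combine N2 β).R N1.L).mulVec (∑ u : G.V, (N1.combine N2 β).feat G N1.L u) j = 0 := by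
    rw [combine_R]
    unfold Matrix.mulVec dotProduct
    simp [Matrix.of_apply, hnl]
  have hb : (N1.combine N2 β).b N1.L j = β := by rw [combine_b, if_neg hnl]
  rw [hC, hR, hb]
  simp [hA]

lemma and_computes (M1 M2 : ZOGNN P1 P2) (c1 c2 : (G : GNNGraph P1 P2) → G.V → Prop)
    (hM1 : M1.Computes c1) (hM2 : M2.Computes c2) (hL : M2.L = M1.L) (h1 : 1 ≤ M1.L) :
    (M1.combine M2 (-1)).Computes (fun G v => c1 G v ∧ c2 G v) := by
  intro G v
  have hidx : (M1.combine M2 (-1)).feat G (M1.combine M2 (-1)).L v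
        (Fin.cast (M1.combine M2 (-1)).dimL.symm (0 : Fin 1))
      = (M1.combine M2 (-1)).feat G (M1.L + 1) v
          (Fin.cast (by rw [combine_L]) (Fin.cast (M1.combine M2 (-1)).dimL.symm (0 : Fin 1))) :=
    feat_congr_layer _ G v (combine_L M1 M2 (-1)) _ _ rfl
  rw [hidx, combine_out M1 M2 (-1) hL h1]
  show c1 G v ∧ c2 G v ↔ _
  rw [hM1 G v, hM2 G v]
  rcases feat_01 M1 G M1.L v (Fin.cast M1.dimL.symm (0 : Fin 1)) with ha | ha <;>
    rcases feat_01 M2 G M2.L v (Fin.cast M2.dimL.symm (0 : Fin 1)) with hb | hb <;>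
    rw [ha, hb] <;> norm_num [f01]

lemma or_computes (M1 M2 : ZOGNN P1 P2) (c1 c2 : (G : GNNGraph P1 P2) → G.V → Prop)
    (hM1 : M1.Computes c1) (hM2 : M2.Computes c2) (hL : M2.L = M1.L) (h1 : 1 ≤ M1.L) :
    (M1.combine M2 0).Computes (fun G v => c1 G v ∨ c2 G v) := by
  intro G v
  have hidx : (M1.combine M2 0).feat G (M1.combine M2 0).L v
        (Fin.cast (M1.combine M2 0).dimL.symm (0 : Fin 1))
      = (M1.combine M2 0).feat G (M1.L + 1) v
          (Fin.cast (by rw [combine_L]) (Fin.cast (M1.combine M2 0).dimL.symm (0 : Fin 1))) :=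
    feat_congr_layer _ G v (combine_L M1 M2 0) _ _ rfl
  rw [hidx, combine_out M1 M2 0 hL h1]
  show c1 G v ∨ c2 G v ↔ _
  rw [hM1 G v, hM2 G v]
  rcases feat_01 M1 G M1.L v (Fin.cast M1.dimL.symm (0 : Fin 1)) with ha | ha <;>
    rcases feat_01 M2 G M2.L v (Fin.cast M2.dimL.symm (0 : Fin 1)) with hb | hb <;>
    rw [ha, hb] <;> norm_num [f01]

end Final

/-- Node classifiers computed by 0/1-GNNs are closed under negation, conjunction and
disjunction. -/
theorem stmt9 (c1 c2 : (G : GNNGraph P1 P2) → G.V → Prop) (N1 N2 : ZOGNN P1 P2)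
    (h1 : N1.Computes c1) (h2 : N2.Computes c2) :
    (∃ N : ZOGNN P1 P2, N.Computes (fun G v => ¬ c1 G v)) ∧
    (∃ N : ZOGNN P1 P2, N.Computes (fun G v => c1 G v ∧ c2 G v)) ∧
    (∃ N : ZOGNN P1 P2, N.Computes (fun G v => c1 G v ∨ c2 G v)) := by
  obtain ⟨M1, hL1, hM1⟩ := pad_to N1 c1 h1 (max N1.L N2.L + 1)
    (Nat.le_succ_of_le (le_max_left _ _))
  obtain ⟨M2, hL2, hM2⟩ := pad_to N2 c2 h2 (max N1.L N2.L + 1)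
    (Nat.le_succ_of_le (le_max_right _ _))
  have hLL : M2.L = M1.L := by rw [hL1, hL2]
  have h1L : 1 ≤ M1.L := by omega
  exact ⟨⟨N1.extend (-1) 1, neg_computes N1 c1 h1⟩,
    ⟨M1.combine M2 (-1), and_computes M1 M2 c1 c2 hM1 hM2 hLL h1L⟩,
    ⟨M1.combine M2 0, or_computes M1 M2 c1 c2 hM1 hM2 hLL h1L⟩⟩
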